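/- Let (q̃_n)_{n≥0} be a sequence of positive reals with q̃_0 = 1 and q̃_{n+1} ≥ 2·q̃_n for all n. Then there exists a real number x whose continued fraction convergents p_n/q_n satisfy (1/2)·q̃_n ≤ q_n ≤ q̃_n for all n. -/

import Mathlib

open GenContFract

/-- Nested compact sets used to construct a real with prescribed partial quotients. -/
private def cfKSet (a : ℕ → ℤ) : ℕ → ℕ → Set ℝ
  | 0, n => Set.Icc (a n : ℝ) ((a n : ℝ) + 1)
  | (m+1), n => (fun t : ℝ => (a n : ℝ) + t⁻¹) '' cfKSet a m (n+1)

private lemma cfKSet_subset {a : ℕ → ℤ} (ha : ∀ n, 1 ≤ a n) :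
    ∀ m n, cfKSet a m n ⊆ Set.Icc (a n : ℝ) ((a n : ℝ) + 1) := by
  intro m
  induction m with
  | zero => intro n; exact subset_rfl
  | succ m ih =>
    rintro n x ⟨t, ht, rfl⟩
    have h1 : (1 : ℝ) ≤ (a (n+1) : ℝ) := by exact_mod_cast ha (n+1)
    have ht1 : (1 : ℝ) ≤ t := le_trans h1 (ih (n+1) ht).1
    have ht0 : (0 : ℝ) < t := by linarith
    have hi0 : 0 < t⁻¹ := inv_pos.mpr ht0
    have hi1 : t⁻¹ ≤ 1 := by
      rw [inv_le_one_iff₀]; right; exact ht1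
    exact ⟨by linarith, by linarith⟩

private lemma cfKSet_anti {a : ℕ → ℤ} (ha : ∀ n, 1 ≤ a n) :
    ∀ m n, cfKSet a (m+1) n ⊆ cfKSet a m n := by
  intro m
  induction m with
  | zero => intro n; exact fun x hx => cfKSet_subset ha 1 n hx
  | succ m ih => intro n; exact Set.image_mono (ih (n+1))

private lemma cfKSet_nonempty {a : ℕ → ℤ} :
    ∀ m n, (cfKSet a m n).Nonempty := by
  intro m
  induction m with
  | zero =>
    intro n
    exact ⟨(a n : ℝ), by simp [cfKSet]⟩
  | succ m ih => intro n; exact ((ih (n+1)).image _)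

private lemma cfKSet_compact {a : ℕ → ℤ} (ha : ∀ n, 1 ≤ a n) :
    ∀ m n, IsCompact (cfKSet a m n) := by
  intro m
  induction m with
  | zero => intro n; exact isCompact_Icc
  | succ m ih =>
    intro n
    refine (ih (n+1)).image_of_continuousOn ?_
    refine continuousOn_const.add (ContinuousOn.inv₀ continuousOn_id ?_)
    intro t ht
    have h1 : (1 : ℝ) ≤ (a (n+1) : ℝ) := by exact_mod_cast ha (n+1)
    have := (cfKSet_subset ha m (n+1) ht).1
    exact ne_of_gt (by linarith)

/-- Existence of a sequence of "tail values" for a prescribed sequence of partial quotients. -/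
private lemma exists_tail_seq {a : ℕ → ℤ} (ha : ∀ n, 1 ≤ a n) :
    ∃ X : ℕ → ℝ, ∀ n, ((a n : ℝ) < X n ∧ X n < (a n : ℝ) + 1) ∧
      X (n + 1) = (X n - (a n : ℝ))⁻¹ := by
  obtain ⟨x0, hx0⟩ := IsCompact.nonempty_iInter_of_sequence_nonempty_isCompact_isClosed
    (fun m => cfKSet a m 0) (fun m => cfKSet_anti ha m 0) (fun m => cfKSet_nonempty m 0)
    (cfKSet_compact ha 0 0) (fun m => (cfKSet_compact ha m 0).isClosed)
  let X : ℕ → ℝ := fun n => Nat.rec x0 (fun n xn => (xn - (a n : ℝ))⁻¹) n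
  have hXs : ∀ n, X (n+1) = (X n - (a n : ℝ))⁻¹ := fun n => rfl
  have hinv : ∀ n m, X n ∈ cfKSet a m n := by
    intro n
    induction n with
    | zero => intro m; exact Set.mem_iInter.mp hx0 m
    | succ n ih =>
      intro m
      obtain ⟨t, ht, heq⟩ := ih (m+1)
      have h1 : (1 : ℝ) ≤ (a (n+1) : ℝ) := by exact_mod_cast ha (n+1)
      have ht1 : (1 : ℝ) ≤ t := le_trans h1 (cfKSet_subset ha m (n+1) ht).1
      have ht0 : (0 : ℝ) < t := by linarith
      have hXt : X n - (a n : ℝ) = t⁻¹ := by rw [← heq]; ring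
      have : X (n+1) = t := by rw [hXs n, hXt, inv_inv]
      rwa [this]
  refine ⟨X, fun n => ⟨?_, hXs n⟩⟩
  obtain ⟨t, ht, heq⟩ := hinv n 2
  obtain ⟨u, hu, hequ⟩ := ht
  have h1 : (1 : ℝ) ≤ (a (n+1) : ℝ) := by exact_mod_cast ha (n+1)
  have h2 : (1 : ℝ) ≤ (a (n+2) : ℝ) := by exact_mod_cast ha (n+2)
  have hu1 : (1 : ℝ) ≤ u := le_trans h2 (cfKSet_subset ha 0 (n+2) hu).1
  have hu0 : (0 : ℝ) < u := by linarith
  have hui : 0 < u⁻¹ := inv_pos.mpr hu0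
  have ht1 : (1 : ℝ) < t := by rw [← hequ]; linarith
  have ht0 : (0 : ℝ) < t := by linarith
  have hti0 : 0 < t⁻¹ := inv_pos.mpr ht0
  have hti1 : t⁻¹ < 1 := by rw [inv_lt_one_iff₀]; right; exact ht1
  constructor
  · rw [← heq]; linarith
  · rw [← heq]; linarith

/-- The `IntFractPair` stream of the constructed number. -/
private lemma stream_eq_of_tail_seq {a : ℕ → ℤ} {X : ℕ → ℝ}
    (hb : ∀ n, (a n : ℝ) < X n ∧ X n < (a n : ℝ) + 1)
    (hrec : ∀ n, X (n + 1) = (X n - (a n : ℝ))⁻¹) :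
    ∀ n, IntFractPair.stream (X 0) n = some ⟨a n, X n - (a n : ℝ)⟩ := by
  have hfloor : ∀ n, ⌊X n⌋ = a n := fun n =>
    Int.floor_eq_iff.mpr ⟨le_of_lt (hb n).1, (hb n).2⟩
  have hof : ∀ n, IntFractPair.of (X n) = ⟨a n, X n - (a n : ℝ)⟩ := by
    intro n
    simp only [IntFractPair.of, Int.fract, hfloor n]
  intro n
  induction n with
  | zero => rw [IntFractPair.stream_zero, hof 0]
  | succ n ih =>
    have hfr : X n - (a n : ℝ) ≠ 0 := ne_of_gt (by linarith [(hb n).1])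
    have h := IntFractPair.stream_succ_of_some ih hfr
    have hinv : ((⟨a n, X n - (a n : ℝ)⟩ : IntFractPair ℝ).fr)⁻¹ = X (n+1) := (hrec n).symm
    rw [h, hinv, hof (n+1)]

/-- State of the denominator recursion: `cfState qq n = (q (n-1), q n)`. -/
private noncomputable def cfState (qq : ℕ → ℝ) : ℕ → ℝ × ℝ
  | 0 => (0, 1)
  | (n+1) => ((cfState qq n).2,
      (⌊(qq (n+1) - (cfState qq n).1) / (cfState qq n).2⌋ : ℤ) * (cfState qq n).2
        + (cfState qq n).1)

/-- The partial quotients. -/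
private noncomputable def cfA (qq : ℕ → ℝ) : ℕ → ℤ
  | 0 => 1
  | (n+1) => ⌊(qq (n+1) - (cfState qq n).1) / (cfState qq n).2⌋

private lemma cfState_succ (qq : ℕ → ℝ) (n : ℕ) :
    cfState qq (n+1) = ((cfState qq n).2,
      (cfA qq (n+1) : ℝ) * (cfState qq n).2 + (cfState qq n).1) := rfl

private lemma cfState_invariant (qq : ℕ → ℝ) (hpos : ∀ n, 0 < qq n) (h0 : qq 0 = 1)
    (hgrow : ∀ n, 2 * qq n ≤ qq (n + 1)) :
    ∀ n, (0 ≤ (cfState qq n).1 ∧ (cfState qq n).1 ≤ (cfState qq n).2 ∧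
      qq n / 2 ≤ (cfState qq n).2 ∧ (cfState qq n).2 ≤ qq n) ∧ 1 ≤ cfA qq (n+1) := by
  have key : ∀ n, (0 ≤ (cfState qq n).1 ∧ (cfState qq n).1 ≤ (cfState qq n).2 ∧
      qq n / 2 ≤ (cfState qq n).2 ∧ (cfState qq n).2 ≤ qq n) →
      (1 ≤ cfA qq (n+1) ∧
        (0 ≤ (cfState qq (n+1)).1 ∧ (cfState qq (n+1)).1 ≤ (cfState qq (n+1)).2 ∧
          qq (n+1) / 2 ≤ (cfState qq (n+1)).2 ∧ (cfState qq (n+1)).2 ≤ qq (n+1))) := by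
    intro n ih
    obtain ⟨hp0, hpq, hql, hqu⟩ := ih
    set p := (cfState qq n).1 with hp
    set q := (cfState qq n).2 with hq
    have hq0 : 0 < q := lt_of_lt_of_le (by linarith [hpos n]) hql
    set t := (qq (n+1) - p) / q with hts
    have htq : t * q = qq (n+1) - p := div_mul_cancel₀ _ (ne_of_gt hq0)
    have ht1 : (1 : ℝ) ≤ t := by
      rw [hts, le_div_iff₀ hq0]
      have := hgrow n
      linarith
    have hf1 : (1 : ℤ) ≤ ⌊t⌋ := Int.le_floor.mpr (by exact_mod_cast ht1)
    have hA : cfA qq (n+1) = ⌊t⌋ := rfl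
    have hfle : (⌊t⌋ : ℝ) ≤ t := Int.floor_le t
    have hfgt : t - 1 < (⌊t⌋ : ℝ) := Int.sub_one_lt_floor t
    have hfr : (1 : ℝ) ≤ (⌊t⌋ : ℝ) := by exact_mod_cast hf1
    have hS : cfState qq (n+1) = (q, (⌊t⌋ : ℝ) * q + p) := rfl
    refine ⟨hA ▸ hf1, ?_⟩
    rw [hS]
    have hgn := hgrow n
    refine ⟨by simp; linarith, ?_, ?_, ?_⟩
    · simp only
      nlinarith
    · simp only
      nlinarith [mul_lt_mul_of_pos_right hfgt hq0]
    · simp only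
      nlinarith [mul_le_mul_of_nonneg_right hfle (le_of_lt hq0)]
  have base : 0 ≤ (cfState qq 0).1 ∧ (cfState qq 0).1 ≤ (cfState qq 0).2 ∧
      qq 0 / 2 ≤ (cfState qq 0).2 ∧ (cfState qq 0).2 ≤ qq 0 := by
    norm_num [cfState, h0]
  intro n
  induction n with
  | zero => exact ⟨base, (key 0 base).1⟩
  | succ n ih => exact ⟨(key n ih.1).2, (key (n+1) (key n ih.1).2).1⟩

theorem exists_real_with_prescribed_cf_denominators (qq : ℕ → ℝ)
    (hpos : ∀ n, 0 < qq n) (h0 : qq 0 = 1) (hgrow : ∀ n, 2 * qq n ≤ qq (n + 1)) :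
    ∃ x : ℝ, ∀ n : ℕ,
      (1 / 2) * qq n ≤ (GenContFract.of x).dens n ∧ (GenContFract.of x).dens n ≤ qq n := by
  set a := cfA qq with haDef
  have hinv := cfState_invariant qq hpos h0 hgrow
  have ha : ∀ n, 1 ≤ a n := by
    intro n
    cases n with
    | zero => exact le_refl 1
    | succ n => exact (hinv n).2
  obtain ⟨X, hX⟩ := exists_tail_seq ha
  have hb : ∀ n, (a n : ℝ) < X n ∧ X n < (a n : ℝ) + 1 := fun n => (hX n).1
  have hrec : ∀ n, X (n + 1) = (X n - (a n : ℝ))⁻¹ := fun n => (hX n).2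
  have hstream := stream_eq_of_tail_seq hb hrec
  refine ⟨X 0, ?_⟩
  have hget : ∀ n, (GenContFract.of (X 0)).s.get? n = some ⟨1, (a (n+1) : ℝ)⟩ := by
    intro n
    exact get?_of_eq_some_of_succ_get?_intFractPair_stream (hstream (n+1))
  have hden : ∀ n, (GenContFract.of (X 0)).dens n = (cfState qq n).2 ∧
      (GenContFract.of (X 0)).dens (n+1) = (cfState qq (n+1)).2 := by
    intro n
    induction n with
    | zero =>
      constructor
      · rw [zeroth_den_eq_one]; rfl
      · rw [first_den_eq (hget 0), cfState_succ]
        show (a 1 : ℝ) = (cfA qq 1 : ℝ) * (cfState qq 0).2 + (cfState qq 0).1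
        simp [cfState, haDef]
    | succ n ih =>
      refine ⟨ih.2, ?_⟩
      rw [dens_recurrence (hget (n+1)) ih.1 ih.2, cfState_succ]
      show (a (n+2) : ℝ) * (cfState qq (n+1)).2 + 1 * (cfState qq n).2 =
        (cfA qq (n+2) : ℝ) * (cfState qq (n+1)).2 + (cfState qq (n+1)).1
      rw [cfState_succ]
      ring
  intro n
  obtain ⟨⟨_, _, hql, hqu⟩, _⟩ := hinv n
  rw [(hden n).1]
  constructor <;> linarith
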